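/- Let φ, φ̃ : [a₁,a₂] → ℝ be C¹ with φ, φ̃ ≥ β²/H for some β > 0 (equivalently q² ≥ β², h ≤ H), satisfying φ′ = −g·ζ′·q²/φ − p and φ̃′ = −g·ζ̃′·q̃²/φ̃ − p̃ pointwise, where ζ, ζ̃ ∈ W^{1,∞}, q, q̃, p, p̃ ∈ L¹ ∩ L^∞ appropriately bounded. Then for all x ∈ [a₁,a₂]: |φ(x) − φ̃(x)| ≤ E + C₂ ∫_{a₁}^{x} |φ − φ̃| dy, where C₂ = (g/β²)‖ζ′‖_∞‖h·h̃‖_∞ with h = q²/φ, h̃ = q̃²/φ̃, and E = |φ(a₁) − φ̃(a₁)| + C₃‖q − q̃‖_{L¹} + C₄‖ζ′ − ζ̃′‖_{L¹} + ‖p − p̃‖_{L¹}, with C₃ = (g/β²)‖h̃‖_∞‖ζ̃′(q + q̃)‖_∞ and C₄ = (g/β²)‖h̃‖_∞‖q²‖_∞. -/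

import Mathlib

open Set Real MeasureTheory

/-- Stability: integral inequality for the difference of solutions of the
inverse ODE, preceding the Grönwall step (Proposition 3.8). -/
theorem stmt9 (g β a₁ a₂ Kz Khh Kh Kzq Kq2 : ℝ)
    (φ φt q qt p pt dζ dζt : ℝ → ℝ)
    (hg : 0 < g) (hβ : 0 < β) (hab : a₁ < a₂)
    (hq : ∀ x ∈ Set.Icc a₁ a₂, β ≤ |q x|)
    (hqt : ∀ x ∈ Set.Icc a₁ a₂, β ≤ |qt x|)
    (hφpos : ∀ x ∈ Set.Icc a₁ a₂, 0 < φ x)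
    (hφtpos : ∀ x ∈ Set.Icc a₁ a₂, 0 < φt x)
    (hKz : ∀ x ∈ Set.Icc a₁ a₂, |dζ x| ≤ Kz)
    (hKhh : ∀ x ∈ Set.Icc a₁ a₂, |((q x) ^ 2 / φ x) * ((qt x) ^ 2 / φt x)| ≤ Khh)
    (hKh : ∀ x ∈ Set.Icc a₁ a₂, |(qt x) ^ 2 / φt x| ≤ Kh)
    (hKzq : ∀ x ∈ Set.Icc a₁ a₂, |dζt x * (q x + qt x)| ≤ Kzq)
    (hKq2 : ∀ x ∈ Set.Icc a₁ a₂, (q x) ^ 2 ≤ Kq2)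
    (hqc : ContinuousOn q (Set.Icc a₁ a₂)) (hqtc : ContinuousOn qt (Set.Icc a₁ a₂))
    (hdζc : ContinuousOn dζ (Set.Icc a₁ a₂)) (hdζtc : ContinuousOn dζt (Set.Icc a₁ a₂))
    (hpc : ContinuousOn p (Set.Icc a₁ a₂)) (hptc : ContinuousOn pt (Set.Icc a₁ a₂))
    (hode : ∀ x ∈ Set.Icc a₁ a₂,
      HasDerivAt φ (-g * dζ x * (q x) ^ 2 / φ x - p x) x)
    (hodet : ∀ x ∈ Set.Icc a₁ a₂,
      HasDerivAt φt (-g * dζt x * (qt x) ^ 2 / φt x - pt x) x) :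
    ∀ x ∈ Set.Icc a₁ a₂,
      |φ x - φt x| ≤
        (|φ a₁ - φt a₁|
          + (g / β ^ 2 * Kh * Kzq) * (∫ y in a₁..a₂, |q y - qt y|)
          + (g / β ^ 2 * Kh * Kq2) * (∫ y in a₁..a₂, |dζ y - dζt y|)
          + (∫ y in a₁..a₂, |p y - pt y|))
        + (g / β ^ 2 * Kz * Khh) * ∫ y in a₁..x, |φ y - φt y| := by
  -- nonnegativity of constants
  have ha1 : a₁ ∈ Set.Icc a₁ a₂ := ⟨le_rfl, hab.le⟩
  have hKz0 : 0 ≤ Kz := (abs_nonneg _).trans (hKz a₁ ha1)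
  have hKhh0 : 0 ≤ Khh := (abs_nonneg _).trans (hKhh a₁ ha1)
  have hKh0 : 0 ≤ Kh := (abs_nonneg _).trans (hKh a₁ ha1)
  have hKzq0 : 0 ≤ Kzq := (abs_nonneg _).trans (hKzq a₁ ha1)
  have hKq20 : 0 ≤ Kq2 := (sq_nonneg _).trans (hKq2 a₁ ha1)
  have hβ2 : (0:ℝ) < β ^ 2 := by positivity
  set C₂ := g / β ^ 2 * Kz * Khh with hC2
  set C₃ := g / β ^ 2 * Kh * Kzq with hC3
  set C₄ := g / β ^ 2 * Kh * Kq2 with hC4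
  have hC30 : 0 ≤ C₃ := by positivity
  have hC40 : 0 ≤ C₄ := by positivity
  set D := fun y => (-g * dζ y * (q y) ^ 2 / φ y - p y)
      - (-g * dζt y * (qt y) ^ 2 / φt y - pt y) with hD
  have hψderiv : ∀ y ∈ Set.Icc a₁ a₂, HasDerivAt (fun z => φ z - φt z) (D y) y :=
    fun y hy => (hode y hy).sub (hodet y hy)
  have hφc : ContinuousOn φ (Set.Icc a₁ a₂) :=
    fun y hy => ((hode y hy).continuousAt).continuousWithinAt
  have hφtc : ContinuousOn φt (Set.Icc a₁ a₂) :=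
    fun y hy => ((hodet y hy).continuousAt).continuousWithinAt
  have hDc : ContinuousOn D (Set.Icc a₁ a₂) := by
    apply ContinuousOn.sub
    · exact (((continuousOn_const.mul hdζc).mul (hqc.pow 2)).div hφc
        (fun y hy => (hφpos y hy).ne')).sub hpc
    · exact (((continuousOn_const.mul hdζtc).mul (hqtc.pow 2)).div hφtc
        (fun y hy => (hφtpos y hy).ne')).sub hptc
  -- pointwise bound on the derivative
  have key : ∀ y ∈ Set.Icc a₁ a₂, |D y| ≤
      C₂ * |φ y - φt y| + (C₃ * |q y - qt y| + C₄ * |dζ y - dζt y| + |p y - pt y|) := by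
    intro y hy
    have hφ := hφpos y hy
    have hφt := hφtpos y hy
    have hq2 : β ^ 2 ≤ (q y) ^ 2 := by
      have h1 := hq y hy
      nlinarith [sq_abs (q y), abs_nonneg (q y)]
    have hqt2 : β ^ 2 ≤ (qt y) ^ 2 := by
      have h1 := hqt y hy
      nlinarith [sq_abs (qt y), abs_nonneg (qt y)]
    have hqtne : qt y ≠ 0 := by
      intro h; rw [h] at hqt2; simp at hqt2; nlinarith
    have hid : D y = (-g * (dζ y * ((q y) ^ 2 / (φ y * φt y))) * (φt y - φ y))
        + (-(g * (1 / φt y) * ((dζ y - dζt y) * (q y) ^ 2)))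
        + (-(g * (1 / φt y) * ((dζt y * (q y + qt y)) * (q y - qt y))))
        + (-(p y - pt y)) := by
      rw [hD]
      field_simp
      ring
    have hX : |(q y) ^ 2 / (φ y * φt y)| ≤ Khh / β ^ 2 := by
      have e : (q y) ^ 2 / (φ y * φt y)
          = ((q y) ^ 2 / φ y * ((qt y) ^ 2 / φt y)) / (qt y) ^ 2 := by
        field_simp
      rw [e, abs_div, abs_of_nonneg (sq_nonneg (qt y))]
      exact div_le_div₀ hKhh0 (hKhh y hy) hβ2 hqt2
    have hY : 1 / φt y ≤ Kh / β ^ 2 := by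
      have e : 1 / φt y = ((qt y) ^ 2 / φt y) / (qt y) ^ 2 := by
        field_simp
      rw [e]
      exact div_le_div₀ hKh0 ((le_abs_self _).trans (hKh y hy)) hβ2 hqt2
    have hYpos : 0 < 1 / φt y := by positivity
    have b1 : |(-g * (dζ y * ((q y) ^ 2 / (φ y * φt y))) * (φt y - φ y))|
        ≤ C₂ * |φ y - φt y| := by
      rw [abs_mul, abs_mul, abs_mul, abs_neg, abs_of_pos hg, abs_sub_comm]
      have : g * (|dζ y| * |(q y) ^ 2 / (φ y * φt y)|) * |φ y - φt y|
          ≤ g * (Kz * (Khh / β ^ 2)) * |φ y - φt y| := by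
        gcongr
        exact hKz y hy
      refine this.trans (le_of_eq ?_)
      rw [hC2]; ring
    have b2 : |(-(g * (1 / φt y) * ((dζ y - dζt y) * (q y) ^ 2)))|
        ≤ C₄ * |dζ y - dζt y| := by
      rw [abs_neg, abs_mul, abs_mul, abs_mul, abs_of_pos hg, abs_of_pos hYpos,
        abs_of_nonneg (sq_nonneg (q y))]
      have : g * (1 / φt y) * (|dζ y - dζt y| * (q y) ^ 2)
          ≤ g * (Kh / β ^ 2) * (|dζ y - dζt y| * Kq2) := by
        gcongr
        exact hKq2 y hy
      refine this.trans (le_of_eq ?_)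
      rw [hC4]; ring
    have b3 : |(-(g * (1 / φt y) * ((dζt y * (q y + qt y)) * (q y - qt y))))|
        ≤ C₃ * |q y - qt y| := by
      rw [abs_neg, abs_mul, abs_mul, abs_mul, abs_of_pos hg, abs_of_pos hYpos]
      have : g * (1 / φt y) * (|dζt y * (q y + qt y)| * |q y - qt y|)
          ≤ g * (Kh / β ^ 2) * (Kzq * |q y - qt y|) := by
        gcongr
        exact hKzq y hy
      refine this.trans (le_of_eq ?_)
      rw [hC3]; ring
    calc |D y| ≤ |(-g * (dζ y * ((q y) ^ 2 / (φ y * φt y))) * (φt y - φ y))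
          + (-(g * (1 / φt y) * ((dζ y - dζt y) * (q y) ^ 2)))
          + (-(g * (1 / φt y) * ((dζt y * (q y + qt y)) * (q y - qt y))))|
          + |(-(p y - pt y))| := by rw [hid]; exact abs_add_le _ _
      _ ≤ (|(-g * (dζ y * ((q y) ^ 2 / (φ y * φt y))) * (φt y - φ y))
          + (-(g * (1 / φt y) * ((dζ y - dζt y) * (q y) ^ 2)))|
          + |(-(g * (1 / φt y) * ((dζt y * (q y + qt y)) * (q y - qt y))))|)
          + |(-(p y - pt y))| := by gcongr; exact abs_add_le _ _
      _ ≤ ((|(-g * (dζ y * ((q y) ^ 2 / (φ y * φt y))) * (φt y - φ y))|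
          + |(-(g * (1 / φt y) * ((dζ y - dζt y) * (q y) ^ 2)))|)
          + |(-(g * (1 / φt y) * ((dζt y * (q y + qt y)) * (q y - qt y))))|)
          + |(-(p y - pt y))| := by gcongr; exact abs_add_le _ _
      _ ≤ C₂ * |φ y - φt y| + (C₃ * |q y - qt y| + C₄ * |dζ y - dζt y| + |p y - pt y|) := by
          simp only [abs_neg] at b1 b2 b3 ⊢
          linarith [b1, b2, b3]
  -- assembly
  intro x hx
  have hxsub : Set.Icc a₁ x ⊆ Set.Icc a₁ a₂ := Set.Icc_subset_Icc le_rfl hx.2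
  have huicc : Set.uIcc a₁ x = Set.Icc a₁ x := Set.uIcc_of_le hx.1
  have huicc2 : Set.uIcc a₁ a₂ = Set.Icc a₁ a₂ := Set.uIcc_of_le hab.le
  have mkInt : ∀ f : ℝ → ℝ, ContinuousOn f (Set.Icc a₁ a₂) →
      IntervalIntegrable f volume a₁ x := by
    intro f hf
    apply ContinuousOn.intervalIntegrable
    rw [huicc]; exact hf.mono hxsub
  have mkInt2 : ∀ f : ℝ → ℝ, ContinuousOn f (Set.Icc a₁ a₂) →
      IntervalIntegrable f volume a₁ a₂ := by
    intro f hf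
    apply ContinuousOn.intervalIntegrable
    rw [huicc2]; exact hf
  have hftc : ∫ y in a₁..x, D y = (φ x - φt x) - (φ a₁ - φt a₁) := by
    apply intervalIntegral.integral_eq_sub_of_hasDerivAt
    · intro y hy
      exact hψderiv y (hxsub (huicc ▸ hy))
    · exact mkInt D hDc
  have cqc : ContinuousOn (fun y => |q y - qt y|) (Set.Icc a₁ a₂) := (hqc.sub hqtc).abs
  have cdc : ContinuousOn (fun y => |dζ y - dζt y|) (Set.Icc a₁ a₂) := (hdζc.sub hdζtc).abs
  have cpc : ContinuousOn (fun y => |p y - pt y|) (Set.Icc a₁ a₂) := (hpc.sub hptc).abs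
  have cψc : ContinuousOn (fun y => |φ y - φt y|) (Set.Icc a₁ a₂) := (hφc.sub hφtc).abs
  have step1 : |φ x - φt x| ≤ |φ a₁ - φt a₁| + |∫ y in a₁..x, D y| := by
    have : φ x - φt x = (φ a₁ - φt a₁) + ∫ y in a₁..x, D y := by rw [hftc]; ring
    rw [this]
    exact abs_add_le _ _
  have step2 : |∫ y in a₁..x, D y| ≤ ∫ y in a₁..x, |D y| :=
    intervalIntegral.abs_integral_le_integral_abs hx.1
  have step3 : (∫ y in a₁..x, |D y|) ≤ ∫ y in a₁..x,
      (C₂ * |φ y - φt y| + (C₃ * |q y - qt y| + C₄ * |dζ y - dζt y| + |p y - pt y|)) := by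
    apply intervalIntegral.integral_mono_on hx.1 (mkInt _ hDc.abs)
    · apply IntervalIntegrable.add
      · exact (mkInt _ (continuousOn_const.mul cψc))
      · exact ((mkInt _ (continuousOn_const.mul cqc)).add
          (mkInt _ (continuousOn_const.mul cdc))).add (mkInt _ cpc)
    · intro y hy
      exact key y (hxsub hy)
  have step4 : (∫ y in a₁..x,
      (C₂ * |φ y - φt y| + (C₃ * |q y - qt y| + C₄ * |dζ y - dζt y| + |p y - pt y|)))
      = C₂ * (∫ y in a₁..x, |φ y - φt y|)
        + (C₃ * (∫ y in a₁..x, |q y - qt y|) + C₄ * (∫ y in a₁..x, |dζ y - dζt y|)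
          + (∫ y in a₁..x, |p y - pt y|)) := by
    rw [intervalIntegral.integral_add (mkInt (fun y => C₂ * |φ y - φt y|) (continuousOn_const.mul cψc))
      (((mkInt (fun y => C₃ * |q y - qt y|) (continuousOn_const.mul cqc)).add
        (mkInt (fun y => C₄ * |dζ y - dζt y|) (continuousOn_const.mul cdc))).add (mkInt _ cpc)),
      intervalIntegral.integral_add ((mkInt (fun y => C₃ * |q y - qt y|) (continuousOn_const.mul cqc)).add
        (mkInt (fun y => C₄ * |dζ y - dζt y|) (continuousOn_const.mul cdc))) (mkInt _ cpc),
      intervalIntegral.integral_add (mkInt (fun y => C₃ * |q y - qt y|) (continuousOn_const.mul cqc))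
        (mkInt (fun y => C₄ * |dζ y - dζt y|) (continuousOn_const.mul cdc)),
      intervalIntegral.integral_const_mul, intervalIntegral.integral_const_mul,
      intervalIntegral.integral_const_mul]
  have mono : ∀ f : ℝ → ℝ, ContinuousOn f (Set.Icc a₁ a₂) →
      (∫ y in a₁..x, |f y|) ≤ ∫ y in a₁..a₂, |f y| := by
    intro f hf
    apply intervalIntegral.integral_mono_interval le_rfl hx.1 hx.2
    · exact Filter.Eventually.of_forall (fun y => abs_nonneg _)
    · exact mkInt2 _ hf.abs
  have e1 : (∫ y in a₁..x, |q y - qt y|) ≤ ∫ y in a₁..a₂, |q y - qt y| :=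
    mono _ (hqc.sub hqtc)
  have e2 : (∫ y in a₁..x, |dζ y - dζt y|) ≤ ∫ y in a₁..a₂, |dζ y - dζt y| :=
    mono _ (hdζc.sub hdζtc)
  have e3 : (∫ y in a₁..x, |p y - pt y|) ≤ ∫ y in a₁..a₂, |p y - pt y| :=
    mono _ (hpc.sub hptc)
  have hq1 : C₃ * (∫ y in a₁..x, |q y - qt y|) ≤ C₃ * ∫ y in a₁..a₂, |q y - qt y| :=
    mul_le_mul_of_nonneg_left e1 hC30
  have hq2 : C₄ * (∫ y in a₁..x, |dζ y - dζt y|) ≤ C₄ * ∫ y in a₁..a₂, |dζ y - dζt y| :=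
    mul_le_mul_of_nonneg_left e2 hC40
  linarith [step1, step2, step3, step4.le, step4.ge]
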